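/- Let J and P be k×k integer matrices with Jᵀ = -J, det(J) = ±1, and PᵀJP = J. Then for all v, w ∈ Λ^k, the difference vᵀJ(t⁻¹P - I)⁻¹w̄ - conj( wᵀJ(t⁻¹P - I)⁻¹v̄ ) equals -vᵀJw̄, which lies in Λ. Hence the pairing (v,w) ↦ vᵀJ(t⁻¹P - I)⁻¹w̄ ∈ Q/Λ on Λ^k/(tP - I)Λ^k is hermitian. -/

import Mathlib

open Matrix

set_option maxHeartbeats 2000000
set_option synthInstance.maxHeartbeats 2000000

/-- The variable `t`, i.e. `X`, in the rational function field `Q = ℚ(t)`. -/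
noncomputable def tQ : RatFunc ℚ := RatFunc.X

/-- The involution `t ↦ t⁻¹` of `ℚ(t)`, applied as a function. -/
noncomputable def conjQ : RatFunc ℚ → RatFunc ℚ :=
  RatFunc.eval (algebraMap ℚ (RatFunc ℚ)) tQ⁻¹

/-- The Laurent polynomial ring `Λ = ℤ[t,t⁻¹]`, as a subring of `ℚ(t)`. -/
noncomputable def Lam : Subring (RatFunc ℚ) := Subring.closure {tQ, tQ⁻¹}

open Polynomial


lemma tQ_transcendental : Transcendental ℚ tQ := by
  have h := (transcendental_algebraMap_iff (R := ℚ) (S := Polynomial ℚ) (A := RatFunc ℚ)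
      (IsFractionRing.injective _ _)).2 (Polynomial.transcendental_X (R := ℚ))
  simpa [tQ, RatFunc.algebraMap_X] using h

lemma tQinv_transcendental : Transcendental ℚ (tQ⁻¹) := by
  unfold Transcendental
  rw [IsAlgebraic.inv_iff]
  exact tQ_transcendental

lemma aeval_tQinv_injective :
    Function.Injective (Polynomial.aeval (R := ℚ) tQ⁻¹) :=
  transcendental_iff_injective.mp tQinv_transcendental

noncomputable def sigmaQ : RatFunc ℚ →+* RatFunc ℚ :=
  IsFractionRing.lift (g := (Polynomial.aeval (R := ℚ) (tQ⁻¹)).toRingHom)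
    aeval_tQinv_injective

lemma sigmaQ_algebraMap (p : Polynomial ℚ) :
    sigmaQ (algebraMap (Polynomial ℚ) (RatFunc ℚ) p) = Polynomial.aeval tQ⁻¹ p :=
  IsFractionRing.lift_algebraMap _ _

lemma sigmaQ_tQ : sigmaQ tQ = tQ⁻¹ := by
  have := sigmaQ_algebraMap Polynomial.X
  simpa [tQ, RatFunc.algebraMap_X] using this

lemma sigmaQ_rat (q : ℚ) : sigmaQ (algebraMap ℚ (RatFunc ℚ) q) = algebraMap ℚ (RatFunc ℚ) q := by
  have := sigmaQ_algebraMap (Polynomial.C q)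
  simpa [RatFunc.algebraMap_C] using this

lemma sigmaQ_sigmaQ (x : RatFunc ℚ) : sigmaQ (sigmaQ x) = x := by
  have : sigmaQ.comp sigmaQ = RingHom.id (RatFunc ℚ) := by
    apply IsLocalization.ringHom_ext (nonZeroDivisors (Polynomial ℚ))
    ext p
    · simp only [RingHom.coe_comp, Function.comp_apply, RingHom.id_apply]
      rw [sigmaQ_algebraMap]
      have h1 : (Polynomial.aeval (R := ℚ) tQ⁻¹) (Polynomial.C p) = algebraMap ℚ (RatFunc ℚ) p := by
        simp
      rw [h1, sigmaQ_rat, RatFunc.algebraMap_C]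
      simp
    · simp only [RingHom.coe_comp, Function.comp_apply, RingHom.id_apply]
      rw [sigmaQ_algebraMap]
      have h1 : (Polynomial.aeval (R := ℚ) tQ⁻¹) Polynomial.X = tQ⁻¹ := by simp
      rw [h1, map_inv₀, sigmaQ_tQ, inv_inv, RatFunc.algebraMap_X]
      rfl
  exact RingHom.congr_fun this x

lemma conjQ_eq (x : RatFunc ℚ) : conjQ x = sigmaQ x := by
  conv_rhs => rw [← RatFunc.num_div_denom x]
  rw [map_div₀, sigmaQ_algebraMap, sigmaQ_algebraMap]
  simp [conjQ, RatFunc.eval, Polynomial.aeval_def]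

lemma tQ_mem_Lam : tQ ∈ Lam := Subring.subset_closure (by simp)
lemma tQinv_mem_Lam : tQ⁻¹ ∈ Lam := Subring.subset_closure (by simp)

lemma sigmaQ_mem_Lam {x : RatFunc ℚ} (hx : x ∈ Lam) : sigmaQ x ∈ Lam := by
  induction hx using Subring.closure_induction with
  | mem y hy =>
    rcases hy with rfl | rfl
    · rw [sigmaQ_tQ]; exact tQinv_mem_Lam
    · rw [map_inv₀, sigmaQ_tQ, inv_inv]; exact tQ_mem_Lam
  | zero => simpa using Subring.zero_mem Lam
  | one => simpa using Subring.one_mem Lam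
  | add x y hx hy ihx ihy => rw [map_add]; exact add_mem ihx ihy
  | neg x hx ihx => rw [map_neg]; exact neg_mem ihx
  | mul x y hx hy ihx ihy => rw [_root_.map_mul]; exact mul_mem ihx ihy

lemma det_one_sub_smul_ne_zero {k : ℕ} (Pq : Matrix (Fin k) (Fin k) ℚ) {a : RatFunc ℚ}
    (ha : Transcendental ℚ a) :
    ((1 : Matrix (Fin k) (Fin k) (RatFunc ℚ)) - a • Pq.map (algebraMap ℚ (RatFunc ℚ))).det ≠ 0 := by
  have h1 : ((1 : Matrix (Fin k) (Fin k) (RatFunc ℚ)) - a • Pq.map (algebraMap ℚ (RatFunc ℚ)))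
      = ((1 - (Polynomial.X : Polynomial ℚ) • Pq.map Polynomial.C).map (Polynomial.aeval a)) := by
    ext i j
    rcases eq_or_ne i j with rfl | hij <;>
      simp [Matrix.map_apply, Matrix.sub_apply, Matrix.smul_apply, Matrix.one_apply, *,
        Polynomial.aeval_def] <;> ring
  rw [h1, ← AlgHom.mapMatrix_apply, ← AlgHom.map_det]
  have h2 : (1 - (Polynomial.X : Polynomial ℚ) • Pq.map Polynomial.C).det = Pq.charpolyRev := rfl
  rw [h2]
  intro h
  have hinj := transcendental_iff_injective.mp ha
  have : Pq.charpolyRev = 0 := by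
    apply hinj
    simpa using h
  have h0 := Matrix.eval_charpolyRev (M := Pq)
  rw [this] at h0
  simp at h0


theorem fibred_blanchfield_hermitian (k : ℕ)
    (J P : Matrix (Fin k) (Fin k) ℤ)
    (hJskew : Jᵀ = -J) (hJ : J.det = 1 ∨ J.det = -1) (hP : Pᵀ * J * P = J)
    (J' P' : Matrix (Fin k) (Fin k) (RatFunc ℚ))
    (hJ' : J' = J.map Int.cast) (hP' : P' = P.map Int.cast)
    (v w : Fin k → RatFunc ℚ) (hv : ∀ i, v i ∈ Lam) (hw : ∀ i, w i ∈ Lam) :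
    (v ⬝ᵥ (J' * (tQ⁻¹ • P' - 1)⁻¹).mulVec (fun i => conjQ (w i))
      - conjQ (w ⬝ᵥ (J' * (tQ⁻¹ • P' - 1)⁻¹).mulVec (fun i => conjQ (v i)))
      = -(v ⬝ᵥ J'.mulVec (fun i => conjQ (w i))))
    ∧ -(v ⬝ᵥ J'.mulVec (fun i => conjQ (w i))) ∈ Lam := by
  have htne : tQ ≠ 0 := RatFunc.X_ne_zero
  set Pq : Matrix (Fin k) (Fin k) ℚ := P.map Int.cast with hPq
  have hP'q : P' = Pq.map (algebraMap ℚ (RatFunc ℚ)) := by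
    rw [hP']; ext i j; simp [hPq, Matrix.map_apply]
  have hmapmul : ∀ (M N : Matrix (Fin k) (Fin k) ℤ),
      (M * N).map (Int.cast : ℤ → RatFunc ℚ) = M.map Int.cast * N.map Int.cast := by
    intro M N
    exact Matrix.map_mul (f := Int.castRingHom (RatFunc ℚ))
  -- determinants
  have hJdet : J'.det ≠ 0 := by
    have h : J'.det = ((J.det : ℤ) : RatFunc ℚ) := by
      have h2 := RingHom.map_det (Int.castRingHom (RatFunc ℚ)) J
      simp only [RingHom.mapMatrix_apply, Int.coe_castRingHom] at h2
      rw [hJ', ← h2]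
    rcases hJ with h1 | h1 <;> rw [h, h1] <;> norm_num
  have hJunit : IsUnit J'.det := isUnit_iff_ne_zero.mpr hJdet
  have hintcast : ∀ n : ℤ, n ≠ 0 → ((n : ℤ) : RatFunc ℚ) ≠ 0 := by
    intro n hn
    have h : ((n : ℤ) : RatFunc ℚ) = algebraMap ℚ (RatFunc ℚ) ((n : ℚ)) := by
      simp
    rw [h]
    exact (map_ne_zero_iff _ (algebraMap ℚ (RatFunc ℚ)).injective).mpr
      (Int.cast_ne_zero.mpr hn)
  have hPdet : P'.det ≠ 0 := by
    have hdet := congrArg Matrix.det hP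
    rw [Matrix.det_mul, Matrix.det_mul, Matrix.det_transpose] at hdet
    have hJne : J.det ≠ 0 := by rcases hJ with h1 | h1 <;> rw [h1] <;> norm_num
    have hPP : P.det * P.det = 1 := by
      have h2 : (P.det * P.det) * J.det = 1 * J.det := by linear_combination hdet
      exact mul_right_cancel₀ hJne h2
    have hPne : P.det ≠ 0 := by
      intro h0; rw [h0, zero_mul] at hPP; exact one_ne_zero hPP.symm
    have h : P'.det = ((P.det : ℤ) : RatFunc ℚ) := by
      have h2 := RingHom.map_det (Int.castRingHom (RatFunc ℚ)) P
      simp only [RingHom.mapMatrix_apply, Int.coe_castRingHom] at h2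
      rw [hP', ← h2]
    rw [h]
    exact hintcast _ hPne
  have hPunit : IsUnit P'.det := isUnit_iff_ne_zero.mpr hPdet
  set A : Matrix (Fin k) (Fin k) (RatFunc ℚ) := tQ⁻¹ • P' - 1 with hA
  set C : Matrix (Fin k) (Fin k) (RatFunc ℚ) := tQ • P' - 1 with hC
  have hAneg : A = -(1 - tQ⁻¹ • Pq.map (algebraMap ℚ (RatFunc ℚ))) := by
    rw [hA, hP'q, neg_sub]
  have hAdet : A.det ≠ 0 := by
    rw [hAneg, Matrix.det_neg]
    exact mul_ne_zero (pow_ne_zero _ (by norm_num))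
      (det_one_sub_smul_ne_zero Pq tQinv_transcendental)
  have hAunit : IsUnit A.det := isUnit_iff_ne_zero.mpr hAdet
  -- skewness and symplectic relation over RatFunc ℚ
  have hJ'skew : J'ᵀ = -J' := by
    rw [hJ']; ext i j
    have h := congrFun (congrFun hJskew i) j
    simp only [Matrix.transpose_apply, Matrix.neg_apply] at h ⊢
    simp [Matrix.map_apply, h]
  have hPJ' : P'ᵀ * J' * P' = J' := by
    have h : (Pᵀ * J * P).map (Int.cast : ℤ → RatFunc ℚ) = J.map Int.cast := by rw [hP]
    rw [hmapmul, hmapmul] at h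
    rw [Matrix.transpose_map] at h
    rw [hJ', hP']
    exact h
  have hPJ2 : P'ᵀ * J' = J' * P'⁻¹ := by
    calc P'ᵀ * J' = (P'ᵀ * J' * P') * P'⁻¹ := by
          rw [Matrix.mul_assoc (P'ᵀ * J'), Matrix.mul_nonsing_inv _ hPunit, Matrix.mul_one]
      _ = J' * P'⁻¹ := by rw [hPJ']
  set B : Matrix (Fin k) (Fin k) (RatFunc ℚ) := tQ • P'⁻¹ - 1 with hBdef
  have hCt : Cᵀ = tQ • P'ᵀ - 1 := by
    rw [hC, Matrix.transpose_sub, Matrix.transpose_smul, Matrix.transpose_one]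
  have hCtJ : Cᵀ * J' = J' * B := by
    rw [hCt, hBdef, Matrix.sub_mul, Matrix.mul_sub, Matrix.smul_mul, Matrix.mul_smul,
      Matrix.one_mul, Matrix.mul_one, hPJ2]
  have hB : B = (-(tQ • P'⁻¹)) * A := by
    rw [hBdef, hA, Matrix.neg_mul, Matrix.mul_sub, Matrix.mul_one, Matrix.smul_mul,
      Matrix.mul_smul, smul_smul, mul_inv_cancel₀ htne, Matrix.nonsing_inv_mul _ hPunit,
      one_smul, neg_sub]
  have hfactinv : (-(tQ • P'⁻¹))⁻¹ = -(tQ⁻¹ • P') := by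
    apply Matrix.inv_eq_right_inv
    rw [Matrix.neg_mul, Matrix.mul_neg, neg_neg, Matrix.smul_mul, Matrix.mul_smul, smul_smul,
      mul_inv_cancel₀ htne, Matrix.nonsing_inv_mul _ hPunit, one_smul]
  have hBinv : B⁻¹ = A⁻¹ * (-(tQ⁻¹ • P')) := by
    rw [hB, Matrix.mul_inv_rev, hfactinv]
  have hsum : A⁻¹ + B⁻¹ = -1 := by
    rw [hBinv, Matrix.mul_neg]
    have h2 : tQ⁻¹ • P' = A + 1 := by rw [hA]; abel
    have h1 : A⁻¹ * (tQ⁻¹ • P') = 1 + A⁻¹ := by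
      rw [h2, Matrix.mul_add, Matrix.mul_one, Matrix.nonsing_inv_mul _ hAunit]
    rw [h1]
    abel
  have hCt_eq : Cᵀ = J' * B * J'⁻¹ := by
    rw [← hCtJ, Matrix.mul_assoc, Matrix.mul_nonsing_inv _ hJunit, Matrix.mul_one]
  have hCtinv : (Cᵀ)⁻¹ * J' = J' * B⁻¹ := by
    rw [hCt_eq, Matrix.mul_inv_rev, Matrix.mul_inv_rev,
      Matrix.nonsing_inv_nonsing_inv _ hJunit, Matrix.mul_assoc, Matrix.mul_assoc,
      Matrix.nonsing_inv_mul _ hJunit, Matrix.mul_one]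
  have hkey : J' * A⁻¹ + (Cᵀ)⁻¹ * J' = -J' := by
    rw [hCtinv, ← Matrix.mul_add, hsum, Matrix.mul_neg, Matrix.mul_one]
  -- conjugation facts
  have hσdot : ∀ (x y : Fin k → RatFunc ℚ) (M : Matrix (Fin k) (Fin k) (RatFunc ℚ)),
      sigmaQ (x ⬝ᵥ M.mulVec y)
        = (fun i => sigmaQ (x i)) ⬝ᵥ (M.map sigmaQ).mulVec (fun i => sigmaQ (y i)) := by
    intro x y M
    simp [dotProduct, Matrix.mulVec, map_sum, Finset.mul_sum, Matrix.map_apply]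
  have hJ'map : J'.map sigmaQ = J' := by
    rw [hJ']; ext i j; simp [Matrix.map_apply]
  have hAmap : A.map sigmaQ = C := by
    rw [hA, hC, hP']; ext i j
    rcases eq_or_ne i j with rfl | hij <;>
      simp [Matrix.map_apply, Matrix.sub_apply, Matrix.smul_apply, Matrix.one_apply, *,
        map_inv₀, sigmaQ_tQ, inv_inv]
  have hAinvmap : (A⁻¹).map sigmaQ = C⁻¹ := by
    have h1 : C * ((A⁻¹).map sigmaQ) = 1 := by
      rw [← hAmap, ← Matrix.map_mul, Matrix.mul_nonsing_inv _ hAunit]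
      ext i j
      rcases eq_or_ne i j with rfl | hij <;> simp [Matrix.map_apply, Matrix.one_apply, *]
    exact (Matrix.inv_eq_right_inv h1).symm
  have hswap : ∀ (x y : Fin k → RatFunc ℚ) (M : Matrix (Fin k) (Fin k) (RatFunc ℚ)),
      x ⬝ᵥ M.mulVec y = y ⬝ᵥ Mᵀ.mulVec x := by
    intro x y M
    rw [Matrix.dotProduct_mulVec, Matrix.mulVec_transpose, dotProduct_comm]
  have hTr : (J' * C⁻¹)ᵀ = -((Cᵀ)⁻¹ * J') := by
    rw [Matrix.transpose_mul, Matrix.transpose_nonsing_inv, hJ'skew, Matrix.mul_neg]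
  -- main rewrite
  simp only [conjQ_eq]
  constructor
  · have hvv : (fun i => sigmaQ (sigmaQ (v i))) = v := by
      funext i; exact sigmaQ_sigmaQ (v i)
    have hterm : sigmaQ (w ⬝ᵥ (J' * A⁻¹).mulVec (fun i => sigmaQ (v i)))
        = v ⬝ᵥ (-((Cᵀ)⁻¹ * J')).mulVec (fun i => sigmaQ (w i)) := by
      rw [hσdot, hvv, Matrix.map_mul, hJ'map, hAinvmap, hswap, hTr]
    rw [hterm, Matrix.neg_mulVec, dotProduct_neg, sub_neg_eq_add, ← dotProduct_add,
      ← Matrix.add_mulVec, hkey, Matrix.neg_mulVec, dotProduct_neg]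
  · refine neg_mem (Subring.sum_mem _ fun i _ => Subring.mul_mem _ (hv i) ?_)
    simp only [Matrix.mulVec, dotProduct]
    refine Subring.sum_mem _ fun j _ => Subring.mul_mem _ ?_ (sigmaQ_mem_Lam (hw j))
    rw [hJ']
    simpa [Matrix.map_apply] using intCast_mem Lam (J i j)
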